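/- Let S be a monic subset of Di[X]. Every nonzero f ∈ Di[X] can be written as f = Σᵢ αᵢ⌊uᵢ⌋_{nᵢ} + Σⱼ βⱼ⌊sⱼbⱼ⌋_{mⱼ}, where each ⌊uᵢ⌋_{nᵢ} ∈ Irr(S), each ⌊sⱼbⱼ⌋_{mⱼ} is a normal S-polynomial, ⌊uᵢ⌋_{nᵢ} ≤ f̄ and the leading monomial of each ⌊sⱼbⱼ⌋_{mⱼ} is ≤ f̄. -/

import Mathlib

namespace CDi

/-- A "diword": a basis element of the free commutative disemigroup `⌊X⁺⌋₁ ∪ ⌊XX⌋₂`: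
a nonempty multiset (commutative word) together with a label `1`, or label `2`
when the word has length `2`. -/
def DiWord (X : Type*) :=
  {p : Multiset X × ℕ // p.1 ≠ 0 ∧ (p.2 = 1 ∨ (p.2 = 2 ∧ Multiset.card p.1 = 2))}

namespace DiWord

variable {X : Type*}

def word (a : DiWord X) : Multiset X := a.1.1

def lbl (a : DiWord X) : ℕ := a.1.2

theorem word_ne (a : DiWord X) : a.word ≠ 0 := a.2.1

theorem add_word_ne (a b : DiWord X) : a.word + b.word ≠ 0 := by
  intro h
  have h1 := congrArg Multiset.card h
  simp only [Multiset.card_add, Multiset.card_zero] at h1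
  have := a.word_ne
  rw [← Multiset.card_pos] at this
  omega

/-- The operation `⊣` on `Disgp[X]`: always produces label 1. -/
def pd (a b : DiWord X) : DiWord X :=
  ⟨(a.word + b.word, 1), add_word_ne a b, Or.inl rfl⟩

/-- The operation `⊢` on `Disgp[X]`: produces label 2 exactly when both factors are
single letters (total length 2), label 1 otherwise. -/
def pv (a b : DiWord X) : DiWord X :=
  ⟨(a.word + b.word, if Multiset.card (a.word + b.word) = 2 then 2 else 1), by
    refine ⟨add_word_ne a b, ?_⟩
    split_ifs with h
    · exact Or.inr ⟨rfl, h⟩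
    · exact Or.inl rfl⟩

/-- `⌊u⌋₁` for a nonempty commutative word `u`. -/
def m1 (u : Multiset X) (h : u ≠ 0) : DiWord X := ⟨(u, 1), h, Or.inl rfl⟩

/-- A single letter `x ∈ X`, i.e. `⌊x⌋₁`. -/
def mX (x : X) : DiWord X := m1 {x} (by simp)

/-- `⌊xx'⌋₂`. -/
def m2 (x y : X) : DiWord X := ⟨({x, y}, 2), by simp, Or.inr ⟨rfl, by simp⟩⟩

end DiWord
/-- A monomial ordering on the free commutative semigroup `⌊X⁺⌋` (nonempty multisets
over `X`): a well-ordering compatible with multiplication. -/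
structure MonOrd (X : Type*) where
  lt : Multiset X → Multiset X → Prop
  wf : WellFounded fun a b : {u : Multiset X // u ≠ 0} => lt a.1 b.1
  trans : ∀ u v w : Multiset X, u ≠ 0 → v ≠ 0 → w ≠ 0 → lt u v → lt v w → lt u w
  total : ∀ u v : Multiset X, u ≠ 0 → v ≠ 0 → u ≠ v → lt u v ∨ lt v u
  compat : ∀ u v w : Multiset X, u ≠ 0 → v ≠ 0 → lt u v → lt (u + w) (v + w)

/-- The monomial-center ordering on `⌊X⁺⌋₁ ∪ ⌊XX⌋₂` induced by a monomial ordering: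
compare the words first, then the labels. -/
def MonOrd.dlt {X : Type*} (o : MonOrd X) (a b : DiWord X) : Prop :=
  o.lt a.word b.word ∨ (a.word = b.word ∧ a.lbl < b.lbl)

def MonOrd.dle {X : Type*} (o : MonOrd X) (a b : DiWord X) : Prop :=
  a = b ∨ o.dlt a b

variable {X k : Type*} [Ring k]

/-- The free commutative dialgebra `Di[X]` (polynomial diring over `k`): the free
`k`-module on the diwords. -/
abbrev Di (X k : Type*) [Ring k] := DiWord X →₀ k

/-- The basis diword `m` viewed as an element of `Di[X]`. -/
noncomputable def mono (m : DiWord X) : Di X k := Finsupp.single m 1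

/-- The operation `⊣` on `Di[X]`, extended bilinearly. -/
noncomputable def pL (f g : Di X k) : Di X k :=
  f.sum fun u a => g.sum fun v b => Finsupp.single (DiWord.pd u v) (a * b)

/-- The operation `⊢` on `Di[X]`, extended bilinearly. -/
noncomputable def pR (f g : Di X k) : Di X k :=
  f.sum fun u a => g.sum fun v b => Finsupp.single (DiWord.pv u v) (a * b)

/-- `m` is the leading monomial of `f` (w.r.t. the monomial-center ordering `o`). -/
def IsLM (o : MonOrd X) (f : Di X k) (m : DiWord X) : Prop :=
  m ∈ f.support ∧ ∀ u ∈ f.support, u ≠ m → o.dlt u m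

/-- `f` is strong: the associative word of its leading monomial is strictly greater than
the associative word of every other monomial in its support (equivalently `f̃ > r̃_f`). -/
def IsStrong (o : MonOrd X) (f : Di X k) : Prop :=
  ∃ m, IsLM o f m ∧ ∀ u ∈ f.support, u ≠ m → o.lt u.word m.word

/-- Normal `S`-polynomials: `s`, `s ⊢ x` (when `|s̃| = 1`), or `s ⊣ ⌊a⌋₁` (when `s` is strong). -/
def IsNormal (o : MonOrd X) (S : Set (Di X k)) (g : Di X k) : Prop :=
  g ∈ S ∨
    (∃ s ∈ S, ∃ x : X, (∃ m, IsLM o s m ∧ Multiset.card m.word = 1) ∧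
      g = pR s (mono (DiWord.mX x))) ∨
    (∃ s ∈ S, ∃ a : Multiset X, ∃ ha : a ≠ 0, IsStrong o s ∧
      g = pL s (mono (DiWord.m1 a ha)))

/-- `m ∈ Irr(S)`: `m` is not the leading monomial of any normal `S`-polynomial. -/
def Irr (o : MonOrd X) (S : Set (Di X k)) (m : DiWord X) : Prop :=
  ∀ g : Di X k, IsNormal o S g → ¬ IsLM o g m

/-- Every element of `S` is monic. -/
def MonicSet (o : MonOrd X) (S : Set (Di X k)) : Prop :=
  ∀ s ∈ S, ∃ m, IsLM o s m ∧ s m = 1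

/-- `h` is trivial modulo `S`: `h` is a linear combination of normal `S`-polynomials whose
leading monomials are `≤` the leading monomial of `h`. -/
def TrivialMod (o : MonOrd X) (S : Set (Di X k)) (h : Di X k) : Prop :=
  ∃ (n : ℕ) (α : Fin n → k) (g : Fin n → Di X k),
    (∀ i, IsNormal o S (g i)) ∧ h = ∑ i, α i • g i ∧
    ∀ i, α i ≠ 0 → ∀ mi mh, IsLM o (g i) mi → IsLM o h mh → o.dle mi mh

/-- The compositions of elements of a (monic) set `S`: multiplication, special, equal,
short intersection, equal multiplication and long intersection compositions. -/
def IsComp (o : MonOrd X) (S : Set (Di X k)) (h : Di X k) : Prop :=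
  -- multiplication composition
  (∃ f ∈ S, ¬ IsStrong o f ∧ ∃ x : X,
      h = pR f (mono (DiWord.mX x)) ∨ h = pL f (mono (DiWord.mX x))) ∨
  -- special composition
  (∃ f ∈ S, IsStrong o f ∧ (∃ m, IsLM o f m ∧ 1 < Multiset.card m.word) ∧
      (∃ u ∈ f.support, ∃ x : X, u = DiWord.mX x) ∧
      ∃ x : X, h = pR f (mono (DiWord.mX x)) - pL f (mono (DiWord.mX x))) ∨
  -- equal composition
  (∃ f ∈ S, ∃ g ∈ S, f ≠ g ∧ (∃ m, IsLM o f m ∧ IsLM o g m) ∧ h = f - g) ∨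
  -- short intersection composition
  (∃ f ∈ S, ∃ g ∈ S, (∃ mf, IsLM o f mf ∧ Multiset.card mf.word = 2) ∧
      (∃ mg, IsLM o g mg ∧ Multiset.card mg.word = 1) ∧
      ∃ x : X, ∃ gx : Di X k,
        (gx = pR g (mono (DiWord.mX x)) ∨ (IsStrong o g ∧ gx = pL g (mono (DiWord.mX x)))) ∧
        (∃ m, IsLM o f m ∧ IsLM o gx m) ∧ h = f - gx) ∨
  -- equal multiplication composition
  (∃ f ∈ S, ∃ g ∈ S, IsStrong o f ∧ IsStrong o g ∧
      ∃ mf mg, IsLM o f mf ∧ IsLM o g mg ∧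
        3 < Multiset.card mf.word + Multiset.card mg.word ∧
        mf ≠ mg ∧ mf.word = mg.word ∧
        ∃ x : X, h = pL f (mono (DiWord.mX x)) - pL g (mono (DiWord.mX x))) ∨
  -- long intersection composition
  (∃ f ∈ S, ∃ g ∈ S, IsStrong o f ∧ IsStrong o g ∧
      ∃ mf mg, IsLM o f mf ∧ IsLM o g mg ∧
        3 < Multiset.card mf.word + Multiset.card mg.word ∧
        mf ≠ mg ∧ mf.word ≠ mg.word ∧
        ∃ w a b : Multiset X,
          mf.word ≤ w ∧ mg.word ≤ w ∧ (∀ w', mf.word ≤ w' → mg.word ≤ w' → w ≤ w') ∧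
          mf.word + a = w ∧ mg.word + b = w ∧
          Multiset.card w < Multiset.card mf.word + Multiset.card mg.word ∧
          ∃ hb : b ≠ 0,
            ((a = 0 ∧ h = f - pL g (mono (DiWord.m1 b hb))) ∨
              (∃ ha : a ≠ 0,
                h = pL f (mono (DiWord.m1 a ha)) - pL g (mono (DiWord.m1 b hb)))))

/-- `S` is a Gröbner–Shirshov basis: `S` is monic and every composition is trivial mod `S`. -/
def IsGSB (o : MonOrd X) (S : Set (Di X k)) : Prop :=
  MonicSet o S ∧ ∀ h, IsComp o S h → TrivialMod o S h

/-- Membership in the (two-sided) ideal `Id(S)` of `Di[X]` generated by `S`. -/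
inductive InIdeal (S : Set (Di X k)) : Di X k → Prop
  | mem {f} : f ∈ S → InIdeal S f
  | zero : InIdeal S 0
  | add {f g} : InIdeal S f → InIdeal S g → InIdeal S (f + g)
  | smul (c : k) {f} : InIdeal S f → InIdeal S (c • f)
  | pL_left (f) {g} : InIdeal S g → InIdeal S (pL f g)
  | pL_right (f) {g} : InIdeal S g → InIdeal S (pL g f)
  | pR_left (f) {g} : InIdeal S g → InIdeal S (pR f g)
  | pR_right (f) {g} : InIdeal S g → InIdeal S (pR g f)

/-- `I` is an ideal of `Di[X]`. -/
def IsIdeal (I : Set (Di X k)) : Prop :=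
  (0 : Di X k) ∈ I ∧ (∀ f g, f ∈ I → g ∈ I → f + g ∈ I) ∧
    (∀ (c : k) f, f ∈ I → c • f ∈ I) ∧
    ∀ f g, g ∈ I → pL f g ∈ I ∧ pL g f ∈ I ∧ pR f g ∈ I ∧ pR g f ∈ I

/-- `Id(S)` as a `k`-submodule of `Di[X]`. -/
def idealSub (S : Set (Di X k)) : Submodule k (Di X k) where
  carrier := {f | InIdeal S f}
  add_mem' := fun hf hg => InIdeal.add hf hg
  zero_mem' := InIdeal.zero
  smul_mem' := fun c _ hf => InIdeal.smul c hf



section Aux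

variable {Y : Type*} (o : MonOrd Y)

theorem DiWord.ext' {a b : DiWord Y} (hw : a.word = b.word) (hl : a.lbl = b.lbl) : a = b :=
  Subtype.ext (Prod.ext hw hl)

private theorem acc_irrefl' {α : Sort*} {r : α → α → Prop} {a : α} (h : Acc r a) : ¬ r a a := by
  induction h with
  | intro x hx ih => exact fun hr => ih x hr hr

theorem MonOrd.lt_irrefl' (u : Multiset Y) (hu : u ≠ 0) : ¬ o.lt u u :=
  acc_irrefl' (r := fun a b : {u : Multiset Y // u ≠ 0} => o.lt a.1 b.1) (o.wf.apply ⟨u, hu⟩)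

theorem MonOrd.dlt_irrefl (a : DiWord Y) : ¬ o.dlt a a := by
  rintro (h | ⟨-, h⟩)
  · exact o.lt_irrefl' a.word a.word_ne h
  · omega

theorem MonOrd.dlt_trans {a b c : DiWord Y} (h1 : o.dlt a b) (h2 : o.dlt b c) : o.dlt a c := by
  rcases h1 with h1 | ⟨hw1, hl1⟩ <;> rcases h2 with h2 | ⟨hw2, hl2⟩
  · exact Or.inl (o.trans _ _ _ a.word_ne b.word_ne c.word_ne h1 h2)
  · exact Or.inl (hw2 ▸ h1)
  · exact Or.inl (hw1 ▸ h2)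
  · exact Or.inr ⟨hw1.trans hw2, hl1.trans hl2⟩

theorem MonOrd.dle_dlt_trans {a b c : DiWord Y} (h1 : o.dle a b) (h2 : o.dlt b c) : o.dlt a c := by
  rcases h1 with rfl | h1
  · exact h2
  · exact o.dlt_trans h1 h2

theorem MonOrd.dlt_total {a b : DiWord Y} (h : a ≠ b) : o.dlt a b ∨ o.dlt b a := by
  by_cases hw : a.word = b.word
  · have hl : a.lbl ≠ b.lbl := fun hl => h (DiWord.ext' hw hl)
    rcases Nat.lt_or_ge a.lbl b.lbl with hlt | hge
    · exact Or.inl (Or.inr ⟨hw, hlt⟩)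
    · exact Or.inr (Or.inr ⟨hw.symm, lt_of_le_of_ne hge (Ne.symm hl)⟩)
  · rcases o.total a.word b.word a.word_ne b.word_ne hw with h1 | h1
    · exact Or.inl (Or.inl h1)
    · exact Or.inr (Or.inl h1)

theorem MonOrd.wf_dlt : WellFounded (o.dlt : DiWord Y → DiWord Y → Prop) := by
  have lexwf : WellFounded (Prod.Lex (fun a b : {u : Multiset Y // u ≠ 0} => o.lt a.1 b.1)
      (fun m n : ℕ => m < n)) := WellFounded.prod_lex o.wf (Nat.lt_wfRel.wf)
  have hinv := InvImage.wf
    (fun a : DiWord Y => ((⟨a.word, a.word_ne⟩ : {u : Multiset Y // u ≠ 0}), a.lbl)) lexwf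
  refine Subrelation.wf ?_ hinv
  intro a b h
  rcases h with h | ⟨hw, hl⟩
  · exact Prod.Lex.left _ _ h
  · have hs : (⟨a.word, a.word_ne⟩ : {u : Multiset Y // u ≠ 0}) = ⟨b.word, b.word_ne⟩ :=
      Subtype.ext hw
    show Prod.Lex _ _ ((⟨a.word, a.word_ne⟩ : {u : Multiset Y // u ≠ 0}), a.lbl)
      ((⟨b.word, b.word_ne⟩ : {u : Multiset Y // u ≠ 0}), b.lbl)
    rw [hs]
    exact Prod.Lex.right _ hl

theorem exists_max_dlt (s : Finset (DiWord Y)) (hs : s.Nonempty) :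
    ∃ m ∈ s, ∀ u ∈ s, u ≠ m → o.dlt u m := by
  classical
  induction s using Finset.induction_on with
  | empty => exact absurd hs (by simp)
  | @insert a s ha ih =>
    rcases s.eq_empty_or_nonempty with rfl | hs'
    · exact ⟨a, by simp, by simp⟩
    · obtain ⟨m, hm, hmax⟩ := ih hs'
      by_cases hab : a = m
      · subst hab
        exact ⟨a, Finset.mem_insert_self _ _, fun u hu hne => by
          rcases Finset.mem_insert.1 hu with rfl | hu
          · exact absurd rfl hne
          · exact hmax u hu hne⟩
      · rcases o.dlt_total hab with h | h
        · refine ⟨m, Finset.mem_insert_of_mem hm, fun u hu hne => ?_⟩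
          rcases Finset.mem_insert.1 hu with rfl | hu
          · exact h
          · exact hmax u hu hne
        · refine ⟨a, Finset.mem_insert_self _ _, fun u hu hne => ?_⟩
          rcases Finset.mem_insert.1 hu with rfl | hu
          · exact absurd rfl hne
          · by_cases hum : u = m
            · exact hum ▸ h
            · exact o.dlt_trans (hmax u hu hum) h

variable {k : Type*} [Ring k]

theorem exists_isLM (f : Di Y k) (hf : f ≠ 0) : ∃ m, IsLM o f m := by
  obtain ⟨m, hm, hmax⟩ := exists_max_dlt o f.support (Finsupp.support_nonempty_iff.mpr hf)
  exact ⟨m, hm, hmax⟩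

theorem isLM_unique {f : Di Y k} {m m' : DiWord Y} (h : IsLM o f m) (h' : IsLM o f m') :
    m = m' := by
  by_contra hne
  exact o.dlt_irrefl m (o.dlt_trans (h'.2 m h.1 hne) (h.2 m' h'.1 (Ne.symm hne)))

theorem reduce_step {K : Type*} [Field K] (f g : Di Y K) (mf : DiWord Y)
    (hmf : IsLM o f mf) (hg : IsLM o g mf) :
    ∃ (c : K) (f' : Di Y K), f = c • g + f' ∧ ∀ u ∈ f'.support, o.dlt u mf := by
  have hgne : g mf ≠ 0 := Finsupp.mem_support_iff.mp hg.1
  refine ⟨f mf / g mf, f - (f mf / g mf) • g, by abel, ?_⟩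
  intro u hu
  have hu0 : f u - (f mf / g mf) * g u ≠ 0 := by
    simpa [Finsupp.sub_apply, Finsupp.smul_apply] using Finsupp.mem_support_iff.mp hu
  have hune : u ≠ mf := by
    rintro rfl
    exact hu0 (by field_simp; simp)
  have : f u ≠ 0 ∨ g u ≠ 0 := by
    by_contra hc
    push_neg at hc
    exact hu0 (by rw [hc.1, hc.2]; ring)
  rcases this with h | h
  · exact hmf.2 u (Finsupp.mem_support_iff.mpr h) hune
  · exact hg.2 u (Finsupp.mem_support_iff.mpr h) hune

end Aux

/-- For a monic subset `S` of `Di[X]`, every nonzero `f ∈ Di[X]` can be written as a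
linear combination of irreducible monomials from `Irr(S)` and normal `S`-polynomials,
all of whose leading monomials are `≤ f̄`. -/
theorem normal_decomposition {Y K : Type*} [Field K] (o : MonOrd Y)
    (S : Set (Di Y K)) (hS : MonicSet o S) (f : Di Y K) (hf : f ≠ 0)
    (mf : DiWord Y) (hmf : IsLM o f mf) :
    ∃ (n1 n2 : ℕ) (a : Fin n1 → K) (u : Fin n1 → DiWord Y)
      (b : Fin n2 → K) (g : Fin n2 → Di Y K),
      (∀ i, Irr o S (u i)) ∧ (∀ j, IsNormal o S (g j)) ∧
      f = (∑ i, a i • mono (u i)) + ∑ j, b j • g j ∧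
      (∀ i, o.dle (u i) mf) ∧
      (∀ j mg, IsLM o (g j) mg → o.dle mg mf) := by
  classical
  refine o.wf_dlt.induction (C := fun mf => ∀ f : Di Y K, f ≠ 0 → IsLM o f mf →
      ∃ (n1 n2 : ℕ) (a : Fin n1 → K) (u : Fin n1 → DiWord Y)
        (b : Fin n2 → K) (g : Fin n2 → Di Y K),
        (∀ i, Irr o S (u i)) ∧ (∀ j, IsNormal o S (g j)) ∧
        f = (∑ i, a i • mono (u i)) + ∑ j, b j • g j ∧
        (∀ i, o.dle (u i) mf) ∧
        (∀ j mg, IsLM o (g j) mg → o.dle mg mf)) mf ?_ f hf hmf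
  clear hf hmf f mf
  intro mf ih f hf hmf
  by_cases hirr : Irr o S mf
  · -- reduce by the irreducible monomial `mf`
    have hgm : IsLM o (mono mf : Di Y K) mf := by
      constructor
      · simp [mono, Finsupp.mem_support_iff]
      · intro u hu hne
        exfalso
        apply hne
        simpa [mono, Finsupp.support_single_ne_zero] using hu
    obtain ⟨c, f', hre, hsup⟩ := reduce_step o f (mono mf) mf hmf hgm
    by_cases hf' : f' = 0
    · refine ⟨1, 0, fun _ => c, fun _ => mf, Fin.elim0, Fin.elim0,
        fun _ => hirr, fun j => j.elim0, ?_, fun _ => Or.inl rfl, fun j => j.elim0⟩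
      simpa [hf'] using hre
    · obtain ⟨mf', hmf'⟩ := exists_isLM o f' hf'
      have hlt : o.dlt mf' mf := hsup mf' hmf'.1
      obtain ⟨n1, n2, a, u, b, g, hu1, hg1, heq, hub, hgb⟩ := ih mf' hlt f' hf' hmf'
      refine ⟨n1 + 1, n2, Fin.cons c a, Fin.cons mf u, b, g, ?_, hg1, ?_, ?_, ?_⟩
      · intro i
        induction i using Fin.cases with
        | zero => exact hirr
        | succ i => simpa using hu1 i
      · rw [hre, heq]
        simp [Fin.sum_univ_succ, add_assoc]
      · intro i
        induction i using Fin.cases with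
        | zero => exact Or.inl (by simp)
        | succ i => exact Or.inr (o.dle_dlt_trans (by simpa using hub i) hlt)
      · intro j mg h
        exact Or.inr (o.dle_dlt_trans (hgb j mg h) hlt)
  · -- reduce by a normal `S`-polynomial with leading monomial `mf`
    have hex : ∃ g0 : Di Y K, IsNormal o S g0 ∧ IsLM o g0 mf := by
      by_contra h
      push_neg at h
      exact hirr fun g hg => h g hg
    obtain ⟨g0, hg0n, hg0lm⟩ := hex
    obtain ⟨c, f', hre, hsup⟩ := reduce_step o f g0 mf hmf hg0lm
    by_cases hf' : f' = 0
    · refine ⟨0, 1, Fin.elim0, Fin.elim0, fun _ => c, fun _ => g0,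
        fun i => i.elim0, fun _ => hg0n, ?_, fun i => i.elim0, ?_⟩
      · simpa [hf'] using hre
      · intro j mg h
        exact Or.inl (isLM_unique o h hg0lm)
    · obtain ⟨mf', hmf'⟩ := exists_isLM o f' hf'
      have hlt : o.dlt mf' mf := hsup mf' hmf'.1
      obtain ⟨n1, n2, a, u, b, g, hu1, hg1, heq, hub, hgb⟩ := ih mf' hlt f' hf' hmf'
      refine ⟨n1, n2 + 1, a, u, Fin.cons c b, Fin.cons g0 g, hu1, ?_, ?_, ?_, ?_⟩
      · intro j
        induction j using Fin.cases with
        | zero => exact hg0n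
        | succ j => simpa using hg1 j
      · rw [hre, heq]
        simp [Fin.sum_univ_succ]
        abel
      · intro i
        exact Or.inr (o.dle_dlt_trans (hub i) hlt)
      · intro j
        induction j using Fin.cases with
        | zero =>
          intro mg h
          exact Or.inl (isLM_unique o (by simpa using h) hg0lm)
        | succ j =>
          intro mg h
          exact Or.inr (o.dle_dlt_trans (hgb j mg (by simpa using h)) hlt)

end CDi
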